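/- Assume that 1 − T : M → M is invertible. Then the fundamental group π₁(A(M,T), 0) of the Alexander quandle based at 0 ∈ M is isomorphic to the abelian group S(M,T). -/

import Mathlib

/-!
Common setup: the adjoint group of the Alexander quandle `A(M,T)` (F.J.-B.J. Clauwens,
"The adjoint group of an Alexander quandle").

For an abelian group `M` with automorphism `T`, the Alexander quandle `A(M,T)` is `M` with
`y * x = T y + x - T x`, and the adjoint group `Adj(A(M,T))` is presented with generators
`e x` for `x : M` and relations `e (y * x) = (e x)⁻¹ * e y * e x`.
-/

open scoped TensorProduct

namespace Clauwens

variable {M : Type*} [AddCommGroup M]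

/-- The relations of the adjoint group of the Alexander quandle `A(M,T)`:
for each `x y : M`, the relation `e_{y*x} = e_x⁻¹ * e_y * e_x`, where `y*x = T y + x - T x`. -/
def rels (T : M ≃+ M) : Set (FreeGroup M) :=
  {r | ∃ x y : M, r = FreeGroup.of (T y + x - T x) *
      ((FreeGroup.of x)⁻¹ * FreeGroup.of y * FreeGroup.of x)⁻¹}

/-- The adjoint group `Adj(A(M,T))` of the Alexander quandle. -/
abbrev Adj (T : M ≃+ M) : Type _ := PresentedGroup (rels T)

/-- The generator `e_x` of the adjoint group. -/
def e (T : M ≃+ M) (x : M) : Adj T := PresentedGroup.of x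

/-- The quandle automorphism `p ↦ p * x = T p + x - T x` of `A(M,T)`. -/
def σ (T : M ≃+ M) (x : M) : Equiv.Perm M where
  toFun p := T p + (x - T x)
  invFun p := T.symm (p - (x - T x))
  left_inv p := by simp
  right_inv p := by simp

lemma σ_apply (T : M ≃+ M) (x p : M) : σ T x p = T p + (x - T x) := rfl

lemma σ_inv_apply (T : M ≃+ M) (x p : M) : (σ T x)⁻¹ p = T.symm (p - (x - T x)) := rfl

lemma σ_rel (T : M ≃+ M) (x y : M) :
    σ T x * σ T y * (σ T x)⁻¹ = σ T (T y + x - T x) := by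
  ext p
  simp only [Equiv.Perm.mul_apply, σ_apply, σ_inv_apply, map_add, map_sub,
    AddEquiv.apply_symm_apply]
  abel

/-- The homomorphism `ρ` from the adjoint group to the group of quandle automorphisms of
`A(M,T)` acting on the right of `M` (hence the `ᵐᵒᵖ`), induced by the right action
`p · e_x = p * x = T p + x - T x`; the automorphism by which `g` acts is `(ρ T g).unop`. -/
def ρ (T : M ≃+ M) : Adj T →* (Equiv.Perm M)ᵐᵒᵖ :=
  PresentedGroup.toGroup (f := fun x => MulOpposite.op (σ T x)) (by
    rintro r ⟨x, y, rfl⟩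
    simp only [map_mul, map_inv, FreeGroup.lift_apply_of, ← MulOpposite.op_inv, ← MulOpposite.op_mul,
      mul_inv_rev, inv_inv]
    rw [MulOpposite.op_eq_one_iff, ← σ_rel T x y]
    group)

/-- `γ(x,y) = e_0⁻¹ e_{x+y} e_y⁻¹ e_0 e_x⁻¹ e_0`, so that
`e_0⁻¹ e_{x+y} = γ(x,y) e_0⁻¹ e_x e_0⁻¹ e_y`. -/
def γ (T : M ≃+ M) (x y : M) : Adj T :=
  (e T 0)⁻¹ * e T (x + y) * (e T y)⁻¹ * e T 0 * (e T x)⁻¹ * e T 0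

/-- `λ(x,y) = γ(y,x)⁻¹ γ(x,y)`. -/
def lam (T : M ≃+ M) (x y : M) : Adj T := (γ T y x)⁻¹ * γ T x y

/-- The additive endomorphism `τ` of `M ⊗_ℤ M` with `τ(x ⊗ y) = T y ⊗ x`. -/
noncomputable def τmap (T : M ≃+ M) : M ⊗[ℤ] M →ₗ[ℤ] M ⊗[ℤ] M :=
  (TensorProduct.comm ℤ M M).toLinearMap ∘ₗ
    (LinearMap.lTensor M T.toAddMonoidHom.toIntLinearMap)

lemma τmap_tmul (T : M ≃+ M) (x y : M) : τmap T (x ⊗ₜ[ℤ] y) = T y ⊗ₜ[ℤ] x := rfl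

/-- `S(M,T) = coker(1 - τ) = (M ⊗_ℤ M)/im(1 - τ)`. -/
abbrev S (T : M ≃+ M) : Type _ :=
  (M ⊗[ℤ] M) ⧸ LinearMap.range (LinearMap.id - τmap T)

/-- The class `[x ⊗ y]` in `S(M,T)`. -/
noncomputable def cls (T : M ≃+ M) (x y : M) : S T := Submodule.Quotient.mk (x ⊗ₜ[ℤ] y)

lemma mk_τmap (T : M ≃+ M) (w : M ⊗[ℤ] M) :
    (Submodule.Quotient.mk (τmap T w) : S T) = Submodule.Quotient.mk w := by
  rw [Submodule.Quotient.eq]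
  exact ⟨-w, by simp [LinearMap.sub_apply]; abel⟩

lemma cls_T (T : M ≃+ M) (x y : M) : cls T (T x) (T y) = cls T x y := by
  have h1 : cls T (T x) (T y) = Submodule.Quotient.mk (τmap T (T y ⊗ₜ[ℤ] x)) := rfl
  have h2 : (Submodule.Quotient.mk (T y ⊗ₜ[ℤ] x) : S T)
      = Submodule.Quotient.mk (τmap T (x ⊗ₜ[ℤ] y)) := rfl
  rw [h1, mk_τmap, h2, mk_τmap]; rfl

lemma cls_add_left (T : M ≃+ M) (x x' y : M) :
    cls T (x + x') y = cls T x y + cls T x' y := by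
  simp only [cls, ← Submodule.Quotient.mk_add, TensorProduct.add_tmul]

lemma cls_add_right (T : M ≃+ M) (x y y' : M) :
    cls T x (y + y') = cls T x y + cls T x y' := by
  simp only [cls, ← Submodule.Quotient.mk_add, TensorProduct.tmul_add]

lemma cls_neg_left (T : M ≃+ M) (x y : M) : cls T (-x) y = -cls T x y := by
  simp only [cls, ← Submodule.Quotient.mk_neg, TensorProduct.neg_tmul]

lemma cls_zero_left (T : M ≃+ M) (y : M) : cls T 0 y = 0 := by
  simp [cls, TensorProduct.zero_tmul]

lemma cls_zero_right (T : M ≃+ M) (x : M) : cls T x 0 = 0 := by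
  simp [cls, TensorProduct.tmul_zero]

/-- `T^m` for `m : ℤ`. -/
def Tz (T : M ≃+ M) (m : ℤ) : M ≃+ M := (m • T : AddAut M)

lemma Tz_zero (T : M ≃+ M) (x : M) : Tz T 0 x = x := rfl

lemma Tz_one (T : M ≃+ M) (x : M) : Tz T 1 x = T x := by simp [Tz]

lemma Tz_add (T : M ≃+ M) (m n : ℤ) (x : M) : Tz T (m + n) x = Tz T m (Tz T n x) := by
  simp [Tz, add_zsmul, AddAut.add_apply]

lemma cls_Tz_shift (T : M ≃+ M) (m : ℤ) (x y : M) :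
    cls T (Tz T (m + 1) x) (Tz T (m + 1) y) = cls T (Tz T m x) (Tz T m y) := by
  have h : ∀ z : M, Tz T (m + 1) z = T (Tz T m z) := by
    intro z; rw [add_comm, Tz_add, Tz_one]
  rw [h, h, cls_T]

lemma cls_Tz (T : M ≃+ M) (m : ℤ) (x y : M) :
    cls T (Tz T m x) (Tz T m y) = cls T x y := by
  induction m using Int.induction_on with
  | zero => rfl
  | succ i ih => rw [cls_Tz_shift, ih]
  | pred i ih =>
      have h := cls_Tz_shift T (-(i : ℤ) - 1) x y
      rw [sub_add_cancel] at h
      rw [← h, ih]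

/-- `F(M,T)` is the set `ℤ × M × S(M,T)` equipped with the multiplication
`(k, x, α)(m, y, β) = (k + m, T^m x + y, α + β + [T^m x ⊗ y])`. -/
abbrev F (T : M ≃+ M) : Type _ := ℤ × M × S T

noncomputable instance (T : M ≃+ M) : Group (F T) where
  mul g h := (g.1 + h.1, Tz T h.1 g.2.1 + h.2.1, g.2.2 + h.2.2 + cls T (Tz T h.1 g.2.1) h.2.1)
  one := ((0 : ℤ), (0 : M), (0 : S T))
  inv g := (-g.1, -(Tz T (-g.1) g.2.1), -g.2.2 + cls T g.2.1 g.2.1)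
  mul_assoc g h k := by
    obtain ⟨a, x, α⟩ := g; obtain ⟨b, y, β⟩ := h; obtain ⟨c, z, δ⟩ := k
    refine Prod.ext (add_assoc a b c) (Prod.ext ?_ ?_)
    · show Tz T c (Tz T b x + y) + z = Tz T (b + c) x + (Tz T c y + z)
      rw [add_comm b c, Tz_add, map_add]
      abel
    · show α + β + cls T (Tz T b x) y + δ + cls T (Tz T c (Tz T b x + y)) z
        = α + (β + δ + cls T (Tz T c y) z) + cls T (Tz T (b + c) x) (Tz T c y + z)
      rw [add_comm b c, Tz_add, map_add, cls_add_left, cls_add_right]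
      have h1 : cls T (Tz T c (Tz T b x)) (Tz T c y) = cls T (Tz T b x) y := cls_Tz T c _ _
      rw [h1]
      abel
  one_mul g := by
    obtain ⟨a, x, α⟩ := g
    refine Prod.ext (zero_add a) (Prod.ext ?_ ?_)
    · show Tz T a 0 + x = x
      rw [map_zero, zero_add]
    · show 0 + α + cls T (Tz T a 0) x = α
      rw [map_zero, cls_zero_left, zero_add, add_zero]
  mul_one g := by
    obtain ⟨a, x, α⟩ := g
    refine Prod.ext (add_zero a) (Prod.ext ?_ ?_)
    · show Tz T 0 x + 0 = x
      rw [Tz_zero, add_zero]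
    · show α + 0 + cls T (Tz T 0 x) 0 = α
      rw [cls_zero_right, add_zero, add_zero]
  inv_mul_cancel g := by
    obtain ⟨a, x, α⟩ := g
    have hx : Tz T a (Tz T (-a) x) = x := by
      rw [← Tz_add, add_neg_cancel, Tz_zero]
    refine Prod.ext (neg_add_cancel a) (Prod.ext ?_ ?_)
    · show Tz T a (-(Tz T (-a) x)) + x = 0
      rw [map_neg, hx, neg_add_cancel]
    · show -α + cls T x x + α + cls T (Tz T a (-(Tz T (-a) x))) x = 0
      rw [map_neg, hx, cls_neg_left]
      abel

/-- The canonical augmentation `ε : Adj(A(M,T)) → ℤ`, with `ε(e_x) = 1` for all `x`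
(written multiplicatively since `Adj` is a multiplicative group). -/
def ε (T : M ≃+ M) : Adj T →* Multiplicative ℤ :=
  PresentedGroup.toGroup (f := fun _ => Multiplicative.ofAdd (1 : ℤ)) (by
    rintro r ⟨x, y, rfl⟩
    simp only [map_mul, map_inv, FreeGroup.lift_apply_of]
    group)

/-- The subgroup `F(M,T)⁰` of elements `(0, x, α)` of `F(M,T)`. -/
noncomputable def Fo (T : M ≃+ M) : Subgroup (F T) where
  carrier := {g | g.1 = 0}
  mul_mem' := by
    rintro ⟨a, x, α⟩ ⟨b, y, β⟩ (ha : a = 0) (hb : b = 0)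
    show a + b = 0
    rw [ha, hb, add_zero]
  one_mem' := rfl
  inv_mem' := by
    rintro ⟨a, x, α⟩ (ha : a = 0)
    show -a = 0
    rw [ha, neg_zero]

/-- The fundamental group `π₁(A(M,T), 0)` of the Alexander quandle based at `0 ∈ M`:
the elements of `ker ε` fixing the base point `0`. -/
def pi1 (T : M ≃+ M) : Subgroup (Adj T) where
  carrier := {g | g ∈ (ε T).ker ∧ (ρ T g).unop 0 = 0}
  one_mem' := ⟨(ε T).ker.one_mem, by simp⟩
  mul_mem' := by
    intro a b ha hb
    refine ⟨(ε T).ker.mul_mem ha.1 hb.1, ?_⟩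
    show ((ρ T) (a * b)).unop 0 = 0
    rw [map_mul, MulOpposite.unop_mul, Equiv.Perm.mul_apply, ha.2, hb.2]
  inv_mem' := by
    intro a ha
    refine ⟨(ε T).ker.inv_mem ha.1, ?_⟩
    show ((ρ T) a⁻¹).unop 0 = 0
    rw [map_inv, MulOpposite.unop_inv]
    exact Equiv.Perm.inv_eq_iff_eq.mpr ha.2.symm


open scoped IsMulCommutative



section Aux

variable (T : M ≃+ M)

lemma adj_rel (x y : M) : e T (T y + x - T x) = (e T x)⁻¹ * e T y * e T x := by
  have hmem : (FreeGroup.of (T y + x - T x) *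
      ((FreeGroup.of x)⁻¹ * FreeGroup.of y * FreeGroup.of x)⁻¹) ∈
      Subgroup.normalClosure (rels T) :=
    Subgroup.subset_normalClosure ⟨x, y, rfl⟩
  have h1 : (QuotientGroup.mk' (Subgroup.normalClosure (rels T)))
      (FreeGroup.of (T y + x - T x) *
      ((FreeGroup.of x)⁻¹ * FreeGroup.of y * FreeGroup.of x)⁻¹) = 1 :=
    (QuotientGroup.eq_one_iff _).mpr hmem
  rw [map_mul, map_inv, mul_inv_eq_one] at h1
  simp only [map_mul, map_inv] at h1
  exact h1

lemma e_rel (x y : M) : e T y * e T x = e T x * e T (T y + x - T x) := by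
  rw [adj_rel]; group

lemma e_a_comm (y : M) : e T y * e T 0 = e T 0 * e T (T y) := by
  have := e_rel T 0 y
  simpa using this

lemma e_a_inv (y : M) : e T y * (e T 0)⁻¹ = (e T 0)⁻¹ * e T (T.symm y) := by
  have h := e_a_comm T (T.symm y)
  rw [AddEquiv.apply_symm_apply] at h
  have h2 : e T y = (e T 0)⁻¹ * (e T (T.symm y) * e T 0) := by rw [h]; group
  rw [h2]; group

/-- `g x = e_0⁻¹ e_x`, the degree-zero generators. -/
def gg (x : M) : Adj T := (e T 0)⁻¹ * e T x

lemma gg_zero : gg T 0 = 1 := inv_mul_cancel _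

lemma gg_rel (x y : M) : gg T y * gg T x = gg T (T x) * gg T (y + (x - T x)) := by
  unfold gg
  have h1 : e T y * (e T 0)⁻¹ = (e T 0)⁻¹ * e T (T.symm y) := e_a_inv T y
  have h2 : e T (T x) * (e T 0)⁻¹ = (e T 0)⁻¹ * e T x := by
    have := e_a_inv T (T x); rwa [AddEquiv.symm_apply_apply] at this
  have h3 : e T (T.symm y) * e T x = e T x * e T (y + (x - T x)) := by
    have := e_rel T x (T.symm y)
    rwa [AddEquiv.apply_symm_apply, show (y : M) + x - T x = y + (x - T x) by abel] at this
  calc (e T 0)⁻¹ * e T y * ((e T 0)⁻¹ * e T x)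
      = (e T 0)⁻¹ * (e T y * (e T 0)⁻¹) * e T x := by group
    _ = (e T 0)⁻¹ * ((e T 0)⁻¹ * e T (T.symm y)) * e T x := by rw [h1]
    _ = (e T 0)⁻¹ * (e T 0)⁻¹ * (e T (T.symm y) * e T x) := by group
    _ = (e T 0)⁻¹ * (e T 0)⁻¹ * (e T x * e T (y + (x - T x))) := by rw [h3]
    _ = (e T 0)⁻¹ * ((e T 0)⁻¹ * e T x) * e T (y + (x - T x)) := by group
    _ = (e T 0)⁻¹ * (e T (T x) * (e T 0)⁻¹) * e T (y + (x - T x)) := by rw [h2]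
    _ = (e T 0)⁻¹ * e T (T x) * ((e T 0)⁻¹ * e T (y + (x - T x))) := by group

/-- The central cocycle `d(p,q) = g p g q g(p+q)⁻¹`. -/
def dd (p q : M) : Adj T := gg T p * gg T q * (gg T (p + q))⁻¹

lemma gg_mul (p q : M) : gg T p * gg T q = dd T p q * gg T (p + q) := by
  unfold dd; group

lemma dd_zero_left (q : M) : dd T 0 q = 1 := by
  unfold dd; rw [gg_zero, zero_add]; group

lemma dd_zero_right (p : M) : dd T p 0 = 1 := by
  unfold dd; rw [gg_zero, add_zero]; group

end Aux
section Aux2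

variable (T : M ≃+ M)

lemma dd_conj (z p q : M) : gg T z * dd T p q = dd T (T p) (T q) * gg T z := by
  have h1 : gg T z * gg T p = gg T (T p) * gg T (z + (p - T p)) := gg_rel T p z
  have h2 : gg T (z + (p - T p)) * gg T q
      = gg T (T q) * gg T (z + (p - T p) + (q - T q)) := gg_rel T q (z + (p - T p))
  have h3 : gg T z * gg T (p + q) = gg T (T (p + q)) * gg T (z + (p + q - T (p + q))) :=
    gg_rel T (p + q) z
  have e1 : z + (p - T p) + (q - T q) = z + (p + q - T (p + q)) := by
    rw [map_add]; abel
  have e2 : T (p + q) = T p + T q := map_add T p q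
  rw [e1] at h2
  have h4 : gg T (z + (p + q - T (p + q))) = (gg T (T p + T q))⁻¹ * (gg T z * gg T (p + q)) := by
    rw [h3, e2]; group
  calc gg T z * dd T p q
      = (gg T z * gg T p) * gg T q * (gg T (p + q))⁻¹ := by unfold dd; group
    _ = gg T (T p) * (gg T (z + (p - T p)) * gg T q) * (gg T (p + q))⁻¹ := by rw [h1]; group
    _ = gg T (T p) * (gg T (T q) * gg T (z + (p + q - T (p + q)))) * (gg T (p + q))⁻¹ := by
        rw [h2]
    _ = gg T (T p) * (gg T (T q) *
          ((gg T (T p + T q))⁻¹ * (gg T z * gg T (p + q)))) * (gg T (p + q))⁻¹ := by rw [h4]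
    _ = gg T (T p) * gg T (T q) * (gg T (T p + T q))⁻¹ * gg T z := by group
    _ = dd T (T p) (T q) * gg T z := by unfold dd; group

lemma dd_T (p q : M) : dd T p q = dd T (T p) (T q) := by
  have := dd_conj T 0 p q
  rwa [gg_zero, one_mul, mul_one] at this

lemma dd_comm_gg (z p q : M) : gg T z * dd T p q = dd T p q * gg T z := by
  rw [dd_conj, ← dd_T]

lemma a_gg (x : M) : e T 0 * gg T x = gg T (T.symm x) * e T 0 := by
  unfold gg
  have h : e T (T.symm x) * e T 0 = e T 0 * e T x := by
    have := e_a_comm T (T.symm x); rwa [AddEquiv.apply_symm_apply] at this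
  calc e T 0 * ((e T 0)⁻¹ * e T x) = e T x := by group
    _ = (e T 0)⁻¹ * (e T 0 * e T x) := by group
    _ = (e T 0)⁻¹ * (e T (T.symm x) * e T 0) := by rw [h]
    _ = (e T 0)⁻¹ * e T (T.symm x) * e T 0 := by group

lemma dd_comm_a (p q : M) : e T 0 * dd T p q = dd T p q * e T 0 := by
  have hx : ∀ x : M, e T 0 * gg T x = gg T (T.symm x) * e T 0 := a_gg T
  have hxi : ∀ x : M, e T 0 * (gg T x)⁻¹ = (gg T (T.symm x))⁻¹ * e T 0 := by
    intro x
    calc e T 0 * (gg T x)⁻¹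
        = (gg T (T.symm x))⁻¹ * (gg T (T.symm x) * e T 0) * (gg T x)⁻¹ := by group
      _ = (gg T (T.symm x))⁻¹ * (e T 0 * gg T x) * (gg T x)⁻¹ := by rw [hx x]
      _ = (gg T (T.symm x))⁻¹ * e T 0 := by group
  have e2 : T.symm (p + q) = T.symm p + T.symm q := map_add T.symm p q
  calc e T 0 * dd T p q
      = (e T 0 * gg T p) * gg T q * (gg T (p + q))⁻¹ := by unfold dd; group
    _ = gg T (T.symm p) * (e T 0 * gg T q) * (gg T (p + q))⁻¹ := by rw [hx p]; group
    _ = gg T (T.symm p) * gg T (T.symm q) * (e T 0 * (gg T (p + q))⁻¹) := by rw [hx q]; group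
    _ = gg T (T.symm p) * gg T (T.symm q) * ((gg T (T.symm p + T.symm q))⁻¹ * e T 0) := by
        rw [hxi (p + q), e2]
    _ = dd T (T.symm p) (T.symm q) * e T 0 := by unfold dd; group
    _ = dd T p q * e T 0 := by
        rw [dd_T T (T.symm p) (T.symm q), AddEquiv.apply_symm_apply, AddEquiv.apply_symm_apply]

lemma e_eq (x : M) : e T x = e T 0 * gg T x := by unfold gg; group

lemma dd_central (p q : M) : ∀ w : Adj T, w * dd T p q = dd T p q * w := by
  intro w
  have hgen : w ∈ Subgroup.closure (Set.range (PresentedGroup.of : M → Adj T)) := by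
    rw [PresentedGroup.closure_range_of]; trivial
  induction hgen using Subgroup.closure_induction with
  | mem x hx =>
      obtain ⟨z, rfl⟩ := hx
      show e T z * dd T p q = dd T p q * e T z
      rw [e_eq, mul_assoc, dd_comm_gg, ← mul_assoc, dd_comm_a, mul_assoc]
  | one => rw [one_mul, mul_one]
  | mul u v hu hv ihu ihv =>
      rw [mul_assoc, ihv, ← mul_assoc, ihu, mul_assoc]
  | inv u hu ihu =>
      calc u⁻¹ * dd T p q = u⁻¹ * (dd T p q * u) * u⁻¹ := by group
        _ = u⁻¹ * (u * dd T p q) * u⁻¹ := by rw [ihu]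
        _ = dd T p q * u⁻¹ := by group

lemma dd_commute (p q : M) (w : Adj T) : Commute w (dd T p q) := dd_central T p q w

lemma dd_cocycle (x x' y : M) :
    dd T x x' * dd T (x + x') y = dd T x' y * dd T x (x' + y) := by
  have h1 : gg T x * gg T x' * gg T y = dd T x x' * dd T (x + x') y * gg T (x + x' + y) := by
    rw [gg_mul T x x', mul_assoc, gg_mul T (x + x') y, ← mul_assoc]
  have h2 : gg T x * gg T x' * gg T y = dd T x' y * dd T x (x' + y) * gg T (x + x' + y) := by
    rw [mul_assoc, gg_mul T x' y, ← mul_assoc, dd_comm_gg, mul_assoc,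
      gg_mul T x (x' + y), show x + (x' + y) = x + x' + y by abel, ← mul_assoc]
  have := h1.symm.trans h2
  exact mul_right_cancel this

lemma dd_K1 (p q : M) : dd T p q = dd T (T q) (p + (q - T q)) := by
  have h1 : dd T p q * gg T (p + q) = dd T (T q) (p + (q - T q)) * gg T (p + q) := by
    rw [← gg_mul T p q, gg_rel T q p, gg_mul T (T q) (p + (q - T q)),
      show T q + (p + (q - T q)) = p + q by abel]
  exact mul_right_cancel h1

lemma dd_N1 (x y : M) : dd T (x - T x) y * dd T y x = dd T x y := by
  have h0 : gg T x = gg T (T x) * gg T (x - T x) := by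
    have := gg_rel T x 0
    rwa [gg_zero, one_mul, zero_add] at this
  have h1 : gg T y * gg T x = gg T (T x) * gg T (y + (x - T x)) := gg_rel T x y
  have h2 : gg T (y + (x - T x)) = (dd T (x - T x) y)⁻¹ * (gg T (x - T x) * gg T y) := by
    rw [gg_mul T (x - T x) y, show x - T x + y = y + (x - T x) by abel]; group
  have key : dd T y x * gg T (x + y) = (dd T (x - T x) y)⁻¹ * (dd T x y * gg T (x + y)) := by
    calc dd T y x * gg T (x + y)
        = dd T y x * gg T (y + x) := by rw [show x + y = y + x from add_comm x y]
      _ = gg T y * gg T x := (gg_mul T y x).symm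
      _ = gg T (T x) * ((dd T (x - T x) y)⁻¹ * (gg T (x - T x) * gg T y)) := by rw [h1, h2]
      _ = (dd T (x - T x) y)⁻¹ * (gg T (T x) * (gg T (x - T x) * gg T y)) := by
          rw [← mul_assoc, ((dd_commute T (x - T x) y (gg T (T x))).inv_right).eq, mul_assoc]
      _ = (dd T (x - T x) y)⁻¹ * (gg T x * gg T y) := by rw [h0]; group
      _ = (dd T (x - T x) y)⁻¹ * (dd T x y * gg T (x + y)) := by rw [gg_mul T x y]
  have key2 : dd T y x = (dd T (x - T x) y)⁻¹ * dd T x y := by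
    have := key
    rw [← mul_assoc] at this
    exact mul_right_cancel this
  rw [key2]; group

end Aux2
section Aux3

variable (T : M ≃+ M)

lemma dd_mem_center (p q : M) : dd T p q ∈ Subgroup.center (Adj T) :=
  Subgroup.mem_center_iff.mpr (dd_central T p q)

/-- `dd` as an element of the additivized center. -/
def ddc (p q : M) : Additive (Subgroup.center (Adj T)) :=
  Additive.ofMul (⟨dd T p q, dd_mem_center T p q⟩ : Subgroup.center (Adj T))

/-- Underlying element of `Adj T` of an element of the additivized center. -/
def vmap (a : Additive (Subgroup.center (Adj T))) : Adj T :=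
  ((Additive.toMul a : Subgroup.center (Adj T)) : Adj T)

lemma vmap_injective : Function.Injective (vmap T) := by
  intro a b h
  exact Additive.toMul.injective (Subtype.ext h)

lemma vmap_add (a b : Additive (Subgroup.center (Adj T))) :
    vmap T (a + b) = vmap T a * vmap T b := rfl

lemma vmap_zero : vmap T 0 = 1 := rfl

lemma vmap_ddc (p q : M) : vmap T (ddc T p q) = dd T p q := rfl

lemma ddc_cocycle (x x' y : M) :
    ddc T x x' + ddc T (x + x') y = ddc T x' y + ddc T x (x' + y) :=
  vmap_injective T (dd_cocycle T x x' y)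

lemma ddc_K1 (p q : M) : ddc T p q = ddc T (T q) (p + (q - T q)) :=
  vmap_injective T (dd_K1 T p q)

lemma ddc_zero_left (q : M) : ddc T 0 q = 0 :=
  vmap_injective T (dd_zero_left T q)

lemma ddc_zero_right (p : M) : ddc T p 0 = 0 :=
  vmap_injective T (dd_zero_right T p)

lemma ddc_N1 (x y : M) : ddc T (x - T x) y + ddc T y x = ddc T x y :=
  vmap_injective T (dd_N1 T x y)

lemma ddc_N1' (x y : M) : ddc T (x - T x) y = ddc T x y - ddc T y x :=
  eq_sub_of_add_eq (ddc_N1 T x y)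

lemma ddc_ccomm_add (x x' y : M) :
    ddc T (x + x') y - ddc T y (x + x')
      = (ddc T x y - ddc T y x) + (ddc T x' y - ddc T y x') := by
  have i1 := ddc_cocycle T x x' y
  have i2 := ddc_cocycle T y x x'
  have i3 := ddc_cocycle T x y x'
  rw [show y + x = x + y from add_comm y x] at i2
  rw [show y + x' = x' + y from add_comm y x'] at i3
  have z1 := sub_eq_zero.mpr i1
  have z2 := sub_eq_zero.mpr i2
  have z3 := sub_eq_zero.mpr i3
  rw [← sub_eq_zero]
  calc (ddc T (x + x') y - ddc T y (x + x'))
        - ((ddc T x y - ddc T y x) + (ddc T x' y - ddc T y x'))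
      = ((ddc T x x' + ddc T (x + x') y) - (ddc T x' y + ddc T x (x' + y)))
        + ((ddc T y x + ddc T (x + y) x') - (ddc T x x' + ddc T y (x + x')))
        - ((ddc T x y + ddc T (x + y) x') - (ddc T y x' + ddc T x (x' + y))) := by abel
    _ = 0 := by rw [z1, z2, z3]; abel

lemma ddc_add_left (hI : M → M) (hfh : ∀ x, hI x - T (hI x) = x) (p p' q : M) :
    ddc T (p + p') q = ddc T p q + ddc T p' q := by
  have key : ddc T ((hI p + hI p') - T (hI p + hI p')) q
      = ddc T (hI p - T (hI p)) q + ddc T (hI p' - T (hI p')) q := by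
    rw [ddc_N1', ddc_N1', ddc_N1', ddc_ccomm_add]
  have e : (hI p + hI p') - T (hI p + hI p') = p + p' := by
    rw [map_add, show hI p + hI p' - (T (hI p) + T (hI p'))
        = (hI p - T (hI p)) + (hI p' - T (hI p')) by abel, hfh, hfh]
  rwa [e, hfh, hfh] at key

lemma ddc_add_right (hI : M → M) (hfh : ∀ x, hI x - T (hI x) = x) (p q q' : M) :
    ddc T p (q + q') = ddc T p q + ddc T p q' := by
  calc ddc T p (q + q') = ddc T (hI p - T (hI p)) (q + q') := by rw [hfh]
    _ = ddc T (hI p) (q + q') - ddc T (q + q') (hI p) := ddc_N1' T (hI p) (q + q')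
    _ = (ddc T (hI p) q - ddc T q (hI p)) + (ddc T (hI p) q' - ddc T q' (hI p)) := by
        have h2 := ddc_ccomm_add T q q' (hI p)
        rw [show ddc T (hI p) (q + q') - ddc T (q + q') (hI p)
            = -(ddc T (q + q') (hI p) - ddc T (hI p) (q + q')) by abel, h2]
        abel
    _ = ddc T (hI p - T (hI p)) q + ddc T (hI p - T (hI p)) q' := by
        rw [ddc_N1', ddc_N1']
    _ = ddc T p q + ddc T p q' := by rw [hfh]

lemma ddc_P3 (hI : M → M) (hfh : ∀ x, hI x - T (hI x) = x) (p q : M) : ddc T p q = ddc T (T q) p := by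
  have h1 : 0 = ddc T (T q) (q - T q) := by
    have := ddc_K1 T 0 q
    rwa [ddc_zero_left, zero_add] at this
  calc ddc T p q = ddc T (T q) (p + (q - T q)) := ddc_K1 T p q
    _ = ddc T (T q) p + ddc T (T q) (q - T q) := ddc_add_right T hI hfh (T q) p (q - T q)
    _ = ddc T (T q) p := by rw [← h1, add_zero]

end Aux3
section Theta

variable (T : M ≃+ M)

lemma cls_neg_right (x y : M) : cls T x (-y) = -cls T x y := by
  simp only [cls, ← Submodule.Quotient.mk_neg, TensorProduct.tmul_neg]

lemma cls_T_left (a b : M) : cls T (T a) b = cls T b a := by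
  have h1 : cls T (T a) b = Submodule.Quotient.mk (τmap T (b ⊗ₜ[ℤ] a)) := rfl
  rw [h1, mk_τmap]; rfl

variable (hE : M ≃+ M)

lemma hE_T (hfh : ∀ x, hE x - T (hE x) = x) (hfh' : ∀ x, hE (x - T x) = x) (x : M) : hE (T x) = T (hE x) := by
  have h1 : T (hE x) - T (T (hE x)) = T x := by
    rw [← map_sub, hfh]
  calc hE (T x) = hE (T (hE x) - T (T (hE x))) := by rw [h1]
    _ = T (hE x) := hfh' _

/-- The biadditive map `(x, y) ↦ ddc (hE x) (hE y)`. -/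
noncomputable def thetaBil (hfh : ∀ x, hE x - T (hE x) = x) : M →+ M →+ Additive (Subgroup.center (Adj T)) :=
  AddMonoidHom.mk' (fun x => AddMonoidHom.mk'
      (fun y => ddc T (hE x) (hE y)) (fun y y' => by
        show ddc T (hE x) (hE (y + y')) = ddc T (hE x) (hE y) + ddc T (hE x) (hE y')
        rw [map_add, ddc_add_right T hE hfh]))
    (fun x x' => by
      ext y
      simp only [AddMonoidHom.mk'_apply, AddMonoidHom.add_apply]
      rw [map_add, ddc_add_left T hE hfh])

/-- The additive map `S T → Additive (center (Adj T))` induced by `thetaBil`. -/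
noncomputable def thetaL (hfh : ∀ x, hE x - T (hE x) = x) (hfh' : ∀ x, hE (x - T x) = x) : S T →ₗ[ℤ] Additive (Subgroup.center (Adj T)) := by
  refine Submodule.liftQ _
    ((TensorProduct.liftAddHom (thetaBil T hE hfh) ?_).toIntLinearMap) ?_
  · intro r m n
    rw [map_zsmul, map_zsmul, AddMonoidHom.smul_apply]
  · rintro _ ⟨w, rfl⟩
    rw [LinearMap.mem_ker, LinearMap.sub_apply, LinearMap.id_apply, map_sub, sub_eq_zero]
    induction w using TensorProduct.induction_on with
    | zero => simp
    | tmul x y =>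
        rw [τmap_tmul]
        show (thetaBil T hE hfh) x y = (thetaBil T hE hfh) (T y) x
        show ddc T (hE x) (hE y) = ddc T (hE (T y)) (hE x)
        rw [hE_T T hE hfh hfh', ← ddc_P3 T hE hfh]
    | add w1 w2 ih1 ih2 =>
        rw [map_add, map_add (τmap T), map_add, ih1, ih2]

/-- `θ : S(M,T) → Adj(A(M,T))`, with central values. -/
noncomputable def theta' (hfh : ∀ x, hE x - T (hE x) = x) (hfh' : ∀ x, hE (x - T x) = x) (s : S T) : Adj T := vmap T (thetaL T hE hfh hfh' s)

lemma theta'_add (hfh : ∀ x, hE x - T (hE x) = x) (hfh' : ∀ x, hE (x - T x) = x) (s t : S T) :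
    theta' T hE hfh hfh' (s + t) = theta' T hE hfh hfh' s * theta' T hE hfh hfh' t := by
  unfold theta'; rw [map_add, vmap_add]

lemma theta'_zero (hfh : ∀ x, hE x - T (hE x) = x) (hfh' : ∀ x, hE (x - T x) = x) : theta' T hE hfh hfh' 0 = 1 := by
  unfold theta'; rw [map_zero, vmap_zero]

lemma theta'_neg (hfh : ∀ x, hE x - T (hE x) = x) (hfh' : ∀ x, hE (x - T x) = x) (s : S T) : theta' T hE hfh hfh' (-s) = (theta' T hE hfh hfh' s)⁻¹ := by
  rw [eq_inv_iff_mul_eq_one, ← theta'_add, neg_add_cancel, theta'_zero]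

lemma theta'_cls (hfh : ∀ x, hE x - T (hE x) = x) (hfh' : ∀ x, hE (x - T x) = x) (x y : M) :
    theta' T hE hfh hfh' (cls T x y) = dd T (hE x) (hE y) := by
  unfold theta' thetaL cls
  rw [Submodule.liftQ_apply]
  rfl

lemma theta'_comm (hfh : ∀ x, hE x - T (hE x) = x) (hfh' : ∀ x, hE (x - T x) = x) (s : S T) (w : Adj T) :
    w * theta' T hE hfh hfh' s = theta' T hE hfh hfh' s * w :=
  Subgroup.mem_center_iff.mp (Additive.toMul (thetaL T hE hfh hfh' s)).2 w

lemma theta'_dd (hfh : ∀ x, hE x - T (hE x) = x) (hfh' : ∀ x, hE (x - T x) = x) (p q : M) :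
    dd T p q = theta' T hE hfh hfh' (cls T (p - T p) (q - T q)) := by
  rw [theta'_cls, hfh', hfh']

end Theta
section Phi

variable (T : M ≃+ M)

lemma F_mul (g h : F T) : g * h =
    (g.1 + h.1, Tz T h.1 g.2.1 + h.2.1, g.2.2 + h.2.2 + cls T (Tz T h.1 g.2.1) h.2.1) := rfl

lemma F_inv (g : F T) : g⁻¹ =
    (-g.1, -(Tz T (-g.1) g.2.1), -g.2.2 + cls T g.2.1 g.2.1) := rfl

lemma F_one : (1 : F T) = ((0 : ℤ), (0 : M), (0 : S T)) := rfl

lemma Tz_neg_one (x : M) : Tz T (-1) x = T.symm x := by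
  show ((-1 : ℤ) • (T : AddAut M)) x = T.symm x
  rw [neg_one_zsmul, AddAut.neg_def]

/-- The map sending the generator `e x` to `(1, x - T x, 0) ∈ F(M,T)`. -/
noncomputable def phiGen (x : M) : F T := ((1 : ℤ), x - T x, (0 : S T))

lemma phi_rels : ∀ r ∈ rels T, FreeGroup.lift (phiGen T) r = 1 := by
  rintro r ⟨x, y, rfl⟩
  rw [map_mul, map_inv, mul_inv_eq_one, map_mul, map_mul, map_inv]
  simp only [FreeGroup.lift_apply_of]
  have h1 : (phiGen T x)⁻¹ = ((-1 : ℤ), -(T.symm (x - T x)), cls T (x - T x) (x - T x)) := by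
    rw [phiGen, F_inv]
    refine Prod.ext rfl (Prod.ext ?_ ?_)
    · show -(Tz T (-1) (x - T x)) = -(T.symm (x - T x))
      rw [Tz_neg_one]
    · show -(0 : S T) + cls T (x - T x) (x - T x) = cls T (x - T x) (x - T x)
      rw [neg_zero, zero_add]
  rw [h1, phiGen, phiGen, phiGen, F_mul, F_mul]
  dsimp only
  refine Prod.ext (by norm_num) (Prod.ext ?_ ?_)
  · show T y + x - T x - T (T y + x - T x)
        = Tz T 1 (Tz T 1 (-(T.symm (x - T x))) + (y - T y)) + (x - T x)
    simp only [Tz_one, map_add, map_sub, map_neg, AddEquiv.apply_symm_apply]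
    abel
  · refine Eq.symm ?_
    show (cls T (x - T x) (x - T x) + 0 + cls T (Tz T 1 (-(T.symm (x - T x)))) (y - T y)) + 0
        + cls T (Tz T 1 (Tz T 1 (-(T.symm (x - T x))) + (y - T y))) (x - T x) = 0
    simp only [Tz_one, map_add, map_neg, AddEquiv.apply_symm_apply]
    rw [cls_neg_left, add_zero, add_zero]
    have h3 : (-T (x - T x) + T (y - T y) : M) = T ((y - T y) - (x - T x)) := by
      simp only [map_sub]; abel
    rw [h3, cls_T_left,
      show ((y - T y) - (x - T x) : M) = (y - T y) + -(x - T x) by abel,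
      cls_add_right, cls_neg_right]
    abel

/-- The canonical homomorphism `Φ : Adj(A(M,T)) → F(M,T)`. -/
noncomputable def Phi : Adj T →* F T := PresentedGroup.toGroup (phi_rels T)

lemma Phi_e (x : M) : Phi T (e T x) = ((1 : ℤ), x - T x, (0 : S T)) :=
  PresentedGroup.toGroup.of (phi_rels T)

lemma Phi_gg (x : M) : Phi T (gg T x) = ((0 : ℤ), x - T x, (0 : S T)) := by
  unfold gg
  rw [map_mul, map_inv, Phi_e, Phi_e]
  rw [F_inv, F_mul]
  refine Prod.ext (by norm_num) (Prod.ext ?_ ?_)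
  · show Tz T 1 (-(Tz T (-1) (0 - T 0))) + (x - T x) = x - T x
    simp [Tz_zero]
  · show (-(0 : S T) + cls T (0 - T 0) (0 - T 0)) + 0
        + cls T (Tz T 1 (-(Tz T (-1) (0 - T 0)))) (x - T x) = 0
    simp [cls_zero_left]

lemma Phi_dd (p q : M) :
    Phi T (dd T p q) = ((0 : ℤ), (0 : M), cls T (p - T p) (q - T q)) := by
  unfold dd
  rw [map_mul, map_mul, map_inv, Phi_gg, Phi_gg, Phi_gg]
  have e1 : (p + q) - T (p + q) = (p - T p) + (q - T q) := by rw [map_add]; abel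
  rw [e1, F_inv, F_mul, F_mul]
  set A := p - T p
  set B := q - T q
  refine Prod.ext (by norm_num) (Prod.ext ?_ ?_)
  · simp only [neg_zero, Tz_zero]
    abel
  · simp only [neg_zero, Tz_zero, cls_neg_right]
    abel

end Phi
section Compare

variable (T : M ≃+ M)

/-- First component of `F(M,T)` as a homomorphism to `Multiplicative ℤ`. -/
def pphi : F T →* Multiplicative ℤ where
  toFun g := Multiplicative.ofAdd g.1
  map_one' := rfl
  map_mul' g h := rfl

lemma eps_eq (g : Adj T) : ε T g = pphi T (Phi T g) := by
  have : ε T = (pphi T).comp (Phi T) := by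
    refine PresentedGroup.ext fun x => ?_
    show ε T (e T x) = pphi T (Phi T (e T x))
    rw [Phi_e]
    rfl
  rw [this]; rfl

/-- The permutation `p ↦ T^k p + u`. -/
def permF (k : ℤ) (u : M) : Equiv.Perm M where
  toFun p := Tz T k p + u
  invFun p := Tz T (-k) (p - u)
  left_inv p := by
    simp only [add_sub_cancel_right, ← Tz_add, neg_add_cancel, Tz_zero]
  right_inv p := by
    simp only [← Tz_add, add_neg_cancel, Tz_zero, sub_add_cancel]

/-- The right action of `F(M,T)` on `M`. -/
def rhoF : F T →* (Equiv.Perm M)ᵐᵒᵖ where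
  toFun g := MulOpposite.op (permF T g.1 g.2.1)
  map_one' := by
    show MulOpposite.op (permF T (1 : F T).1 (1 : F T).2.1) = 1
    rw [MulOpposite.op_eq_one_iff]
    ext p
    show Tz T 0 p + 0 = p
    rw [Tz_zero, add_zero]
  map_mul' g h := by
    show MulOpposite.op (permF T (g * h).1 (g * h).2.1)
      = MulOpposite.op (permF T g.1 g.2.1) * MulOpposite.op (permF T h.1 h.2.1)
    rw [← MulOpposite.op_mul]
    congr 1
    ext p
    show Tz T (g.1 + h.1) p + (Tz T h.1 g.2.1 + h.2.1)
      = Tz T h.1 (Tz T g.1 p + g.2.1) + h.2.1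
    rw [show g.1 + h.1 = h.1 + g.1 from add_comm g.1 h.1, Tz_add, map_add]
    abel

lemma rho_eq (g : Adj T) : ρ T g = rhoF T (Phi T g) := by
  have : ρ T = (rhoF T).comp (Phi T) := by
    refine PresentedGroup.ext fun x => ?_
    show ρ T (e T x) = rhoF T (Phi T (e T x))
    rw [Phi_e]
    show ρ T (e T x) = MulOpposite.op (permF T 1 (x - T x))
    have h1 : ρ T (e T x) = MulOpposite.op (σ T x) := PresentedGroup.toGroup.of _
    rw [h1]
    congr 1
  rw [this]; rfl

lemma Phi_a_pow (k : ℤ) : Phi T ((e T 0) ^ k) = ((k : ℤ), (0 : M), (0 : S T)) := by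
  have ha : Phi T (e T 0) = ((1 : ℤ), (0 : M), (0 : S T)) := by
    rw [Phi_e]
    refine Prod.ext rfl (Prod.ext ?_ ?_) <;> simp
  rw [map_zpow, ha]
  induction k using Int.induction_on with
  | zero => rfl
  | succ i ih =>
      rw [zpow_add_one, ih, F_mul]
      refine Prod.ext rfl (Prod.ext ?_ ?_) <;> simp [Tz_zero, cls_zero_left]
  | pred i ih =>
      rw [zpow_sub_one, ih, F_inv, F_mul]
      refine Prod.ext (by dsimp only; ring) (Prod.ext ?_ ?_) <;>
        simp [Tz_zero, cls_zero_left, cls_zero_right]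

variable (hE : M ≃+ M) (hfh : ∀ x, hE x - T (hE x) = x) (hfh' : ∀ x, hE (x - T x) = x)

lemma Phi_theta' (s : S T) : Phi T (theta' T hE hfh hfh' s) = ((0 : ℤ), (0 : M), s) := by
  obtain ⟨w, rfl⟩ := Submodule.Quotient.mk_surjective _ s
  induction w using TensorProduct.induction_on with
  | zero =>
      have h0 : (Submodule.Quotient.mk 0 : S T) = 0 := rfl
      rw [h0, theta'_zero, map_one]
      rfl
  | tmul x y =>
      have hc : (Submodule.Quotient.mk (x ⊗ₜ[ℤ] y) : S T) = cls T x y := rfl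
      rw [hc, theta'_cls, Phi_dd, hfh, hfh]
  | add w1 w2 ih1 ih2 =>
      rw [Submodule.Quotient.mk_add, theta'_add, map_mul, ih1, ih2, F_mul]
      refine Prod.ext (by norm_num) (Prod.ext ?_ ?_) <;>
        simp [Tz_zero, cls_zero_left, Submodule.Quotient.mk_add]

end Compare
section NormalForm

variable (T : M ≃+ M)

lemma Tz_succ (m : ℤ) (x : M) : Tz T (m + 1) x = T (Tz T m x) := by
  rw [add_comm, Tz_add, Tz_one]

lemma Tz_pred (m : ℤ) (x : M) : Tz T (m - 1) x = T.symm (Tz T m x) := by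
  rw [sub_eq_neg_add, Tz_add, Tz_neg_one]

lemma gg_a (x : M) : gg T x * e T 0 = e T 0 * gg T (T x) := by
  have := a_gg T (T x)
  rw [AddEquiv.symm_apply_apply] at this
  exact this.symm

lemma gg_a_inv (x : M) : gg T x * (e T 0)⁻¹ = (e T 0)⁻¹ * gg T (T.symm x) := by
  have h := a_gg T x
  calc gg T x * (e T 0)⁻¹ = (e T 0)⁻¹ * (e T 0 * gg T x) * (e T 0)⁻¹ := by group
    _ = (e T 0)⁻¹ * (gg T (T.symm x) * e T 0) * (e T 0)⁻¹ := by rw [h]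
    _ = (e T 0)⁻¹ * gg T (T.symm x) := by group

lemma gg_a_zpow (m : ℤ) (x : M) :
    gg T x * (e T 0) ^ m = (e T 0) ^ m * gg T (Tz T m x) := by
  induction m using Int.induction_on with
  | zero => rw [zpow_zero, one_mul, mul_one, Tz_zero]
  | succ i ih =>
      rw [zpow_add_one, ← mul_assoc, ih, mul_assoc, gg_a, ← mul_assoc, ← zpow_add_one,
        Tz_succ]
  | pred i ih =>
      rw [zpow_sub_one, ← mul_assoc, ih, mul_assoc, gg_a_inv, ← mul_assoc, ← zpow_sub_one,
        Tz_pred]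

variable (hE : M ≃+ M) (hfh : ∀ x, hE x - T (hE x) = x) (hfh' : ∀ x, hE (x - T x) = x)

lemma normal_form (w : Adj T) : ∃ (k : ℤ) (x : M) (s : S T),
    w = (e T 0) ^ k * gg T x * theta' T hE hfh hfh' s := by
  have hgen : w ∈ Subgroup.closure (Set.range (PresentedGroup.of : M → Adj T)) := by
    rw [PresentedGroup.closure_range_of]; trivial
  induction hgen using Subgroup.closure_induction with
  | mem u hu =>
      obtain ⟨z, rfl⟩ := hu
      exact ⟨1, z, 0, by rw [zpow_one, theta'_zero, mul_one, ← e_eq]; rfl⟩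
  | one => exact ⟨0, 0, 0, by rw [zpow_zero, gg_zero, theta'_zero, one_mul, mul_one]⟩
  | mul u v hu hv ihu ihv =>
      obtain ⟨k, x, s, rfl⟩ := ihu
      obtain ⟨m, y, t, rfl⟩ := ihv
      refine ⟨k + m, Tz T m x + y,
        cls T (Tz T m x - T (Tz T m x)) (y - T y) + (s + t), ?_⟩
      have hc : dd T (Tz T m x) y
          = theta' T hE hfh hfh' (cls T (Tz T m x - T (Tz T m x)) (y - T y)) :=
        theta'_dd T hE hfh hfh' (Tz T m x) y
      calc (e T 0) ^ k * gg T x * theta' T hE hfh hfh' s *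
            ((e T 0) ^ m * gg T y * theta' T hE hfh hfh' t)
          = (e T 0) ^ k * gg T x *
            (theta' T hE hfh hfh' s * ((e T 0) ^ m * gg T y)) *
            theta' T hE hfh hfh' t := by group
        _ = (e T 0) ^ k * gg T x *
            ((e T 0) ^ m * gg T y * theta' T hE hfh hfh' s) *
            theta' T hE hfh hfh' t := by
            rw [theta'_comm T hE hfh hfh' s ((e T 0) ^ m * gg T y)]
        _ = (e T 0) ^ k * (gg T x * (e T 0) ^ m) * gg T y *
            (theta' T hE hfh hfh' s * theta' T hE hfh hfh' t) := by group
        _ = (e T 0) ^ k * ((e T 0) ^ m * gg T (Tz T m x)) * gg T y *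
            (theta' T hE hfh hfh' s * theta' T hE hfh hfh' t) := by rw [gg_a_zpow]
        _ = (e T 0) ^ (k + m) * (gg T (Tz T m x) * gg T y) *
            (theta' T hE hfh hfh' s * theta' T hE hfh hfh' t) := by
            rw [zpow_add]; group
        _ = (e T 0) ^ (k + m) * (dd T (Tz T m x) y * gg T (Tz T m x + y)) *
            (theta' T hE hfh hfh' s * theta' T hE hfh hfh' t) := by rw [gg_mul]
        _ = (e T 0) ^ (k + m) * gg T (Tz T m x + y) *
            (theta' T hE hfh hfh' (cls T (Tz T m x - T (Tz T m x)) (y - T y)) *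
              (theta' T hE hfh hfh' s * theta' T hE hfh hfh' t)) := by
            rw [hc, ← theta'_comm T hE hfh hfh'
              (cls T (Tz T m x - T (Tz T m x)) (y - T y)) (gg T (Tz T m x + y))]
            group
        _ = (e T 0) ^ (k + m) * gg T (Tz T m x + y) *
            theta' T hE hfh hfh' (cls T (Tz T m x - T (Tz T m x)) (y - T y) + (s + t)) := by
            rw [theta'_add, theta'_add]
  | inv u hu ihu =>
      obtain ⟨k, x, s, rfl⟩ := ihu
      set c := cls T (x - T x) (-x - T (-x)) with hcdef
      have h1 : gg T x * gg T (-x) = dd T x (-x) := by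
        rw [gg_mul, add_neg_cancel, gg_zero, mul_one]
      have hginv : (gg T x)⁻¹ = gg T (-x) * (theta' T hE hfh hfh' c)⁻¹ := by
        calc (gg T x)⁻¹ = gg T (-x) * (gg T x * gg T (-x))⁻¹ := by group
          _ = gg T (-x) * (dd T x (-x))⁻¹ := by rw [h1]
          _ = gg T (-x) * (theta' T hE hfh hfh' c)⁻¹ := by
              rw [theta'_dd T hE hfh hfh' x (-x)]
      refine ⟨-k, Tz T (-k) (-x), -c + -s, ?_⟩
      calc ((e T 0) ^ k * gg T x * theta' T hE hfh hfh' s)⁻¹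
          = (theta' T hE hfh hfh' s)⁻¹ * ((gg T x)⁻¹ * ((e T 0) ^ k)⁻¹) := by group
        _ = theta' T hE hfh hfh' (-s) *
            ((gg T (-x) * (theta' T hE hfh hfh' c)⁻¹) * (e T 0) ^ (-k)) := by
            rw [theta'_neg, hginv, zpow_neg]
        _ = theta' T hE hfh hfh' (-s) *
            ((gg T (-x) * theta' T hE hfh hfh' (-c)) * (e T 0) ^ (-k)) := by
            rw [← theta'_neg T hE hfh hfh' c]
        _ = theta' T hE hfh hfh' (-s) *
            (theta' T hE hfh hfh' (-c) * (gg T (-x) * (e T 0) ^ (-k))) := by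
            rw [theta'_comm T hE hfh hfh' (-c) (gg T (-x))]; group
        _ = theta' T hE hfh hfh' (-s) *
            (theta' T hE hfh hfh' (-c) * ((e T 0) ^ (-k) * gg T (Tz T (-k) (-x)))) := by
            rw [gg_a_zpow]
        _ = (theta' T hE hfh hfh' (-s) * theta' T hE hfh hfh' (-c)) *
            ((e T 0) ^ (-k) * gg T (Tz T (-k) (-x))) := by group
        _ = ((e T 0) ^ (-k) * gg T (Tz T (-k) (-x))) *
            (theta' T hE hfh hfh' (-s) * theta' T hE hfh hfh' (-c)) := by
            rw [← theta'_add, theta'_comm T hE hfh hfh' (-s + -c)]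
        _ = (e T 0) ^ (-k) * gg T (Tz T (-k) (-x)) * theta' T hE hfh hfh' (-c + -s) := by
            rw [← theta'_add, show (-s + -c : S T) = -c + -s by abel]

end NormalForm
/-- If `1 - T` is invertible, the fundamental group `π₁(A(M,T), 0)` of the Alexander quandle
based at `0 ∈ M` is isomorphic to the abelian group `S(M,T)`. -/
theorem statement16 (T : M ≃+ M) (hT : Function.Bijective fun x : M => x - T x) :
    Nonempty (pi1 T ≃* Multiplicative (S T)) := by
  classical
  -- the inverse of `x ↦ x - T x`
  let fHom : M →+ M := AddMonoidHom.mk' (fun x => x - T x) (by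
    intro a b
    simp only [map_add]
    abel)
  have hbij : Function.Bijective fHom := hT
  let hEq : M ≃+ M := AddEquiv.ofBijective fHom hbij
  let hE : M ≃+ M := hEq.symm
  have hfh : ∀ x, hE x - T (hE x) = x := fun x => hEq.apply_symm_apply x
  have hfh' : ∀ x, hE (x - T x) = x := fun x => hEq.symm_apply_apply x
  -- components of `Φ` on `pi1`
  have hcomp : ∀ g : Adj T, g ∈ pi1 T → (Phi T g).1 = 0 ∧ (Phi T g).2.1 = 0 := by
    intro g hg
    obtain ⟨h1, h2⟩ := hg
    constructor
    · have h3 : Multiplicative.ofAdd (Phi T g).1 = 1 := by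
        rw [show Multiplicative.ofAdd (Phi T g).1 = pphi T (Phi T g) from rfl, ← eps_eq]
        exact h1
      exact Multiplicative.ofAdd.injective h3
    · rw [rho_eq] at h2
      have h5 : Tz T (Phi T g).1 0 + (Phi T g).2.1 = 0 := h2
      rwa [map_zero, zero_add] at h5
  -- the homomorphism
  let φ : pi1 T →* Multiplicative (S T) := {
    toFun := fun g => Multiplicative.ofAdd (Phi T (g : Adj T)).2.2
    map_one' := by
      show Multiplicative.ofAdd (Phi T 1).2.2 = 1
      rw [map_one]
      rfl
    map_mul' := fun g h => by
      have hg2 : (Phi T (↑g : Adj T)).2.1 = 0 := (hcomp _ g.2).2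
      show Multiplicative.ofAdd (Phi T ((↑g : Adj T) * ↑h)).2.2 = _
      rw [map_mul, F_mul]
      dsimp only
      rw [hg2, map_zero, cls_zero_left, add_zero]
      rfl }
  have hsurj : Function.Surjective φ := by
    intro s
    have hmem : theta' T hE hfh hfh' s.toAdd ∈ pi1 T := by
      constructor
      · show _ ∈ (ε T).ker
        rw [MonoidHom.mem_ker, eps_eq, Phi_theta']
        rfl
      · show (ρ T _).unop 0 = 0
        rw [rho_eq, Phi_theta']
        show Tz T 0 0 + 0 = 0
        rw [Tz_zero, add_zero]
    refine ⟨⟨_, hmem⟩, ?_⟩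
    show Multiplicative.ofAdd (Phi T (theta' T hE hfh hfh' s.toAdd)).2.2 = s
    rw [Phi_theta']
    rfl
  have hinj : Function.Injective φ := by
    rw [injective_iff_map_eq_one]
    intro g hg1
    have h0 := hcomp (↑g : Adj T) g.2
    have h3 : (Phi T (↑g : Adj T)).2.2 = 0 := by
      have := congrArg Multiplicative.toAdd hg1
      exact this
    obtain ⟨k, x, s, hw⟩ := normal_form T hE hfh hfh' (↑g : Adj T)
    have hΦw : Phi T (↑g : Adj T) = ((k : ℤ), x - T x, s) := by
      rw [hw, map_mul, map_mul, Phi_a_pow, Phi_gg, Phi_theta', F_mul, F_mul]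
      refine Prod.ext ?_ (Prod.ext ?_ ?_) <;>
        simp [Tz_zero, cls_zero_left, cls_zero_right]
    have hk : k = 0 := by rw [hΦw] at h0; exact h0.1
    have hxs : x - T x = 0 := by rw [hΦw] at h0; exact h0.2
    have hs : s = 0 := by rw [hΦw] at h3; exact h3
    have hx0 : x = 0 := by
      have h6 : x - T x = 0 - T 0 := by rw [hxs, map_zero, sub_zero]
      exact hT.1 h6
    have hone : (↑g : Adj T) = 1 := by
      rw [hw, hk, hx0, hs, zpow_zero, gg_zero, theta'_zero, one_mul, mul_one]
    exact Subtype.ext hone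
  exact ⟨MulEquiv.ofBijective φ ⟨hinj, hsurj⟩⟩

end Clauwens
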